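/- Let P be a uniform, b-bounded AC-MAS over an infinite interpretation domain U with adom(s0) ⊆ C, and let U' be an interpretation domain with C ⊆ U' and |U'| ≥ 2b + |C| + N_Ag. Then any ⊕-abstraction P' of P over U' is ⊕-bisimilar to P. -/

import Mathlib

/-!  Common formalisation of artifact-centric multi-agent systems (AC-MAS). -/

open Set

/-- A database schema: a finite type of relation symbols, each with an arity. -/
structure Schema : Type 1 where
  Rel : Type
  [relFin : Fintype Rel]
  arity : Rel → ℕ

attribute [instance] Schema.relFin

/-- A `D`-instance over an interpretation domain `U`: every relation symbol is
interpreted as a finite set of tuples over `U`. -/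
structure Inst (D : Schema) (U : Type) : Type where
  rel : ∀ r : D.Rel, Set (Fin (D.arity r) → U)
  finite : ∀ r, (rel r).Finite

/-- The active domain of an instance. -/
def Inst.adom {D : Schema} {U : Type} (I : Inst D U) : Set U :=
  { u | ∃ (r : D.Rel) (t : Fin (D.arity r) → U), t ∈ I.rel r ∧ ∃ j, t j = u }

/-- The schema `D` together with a primed copy of every relation symbol. -/
def Schema.double (D : Schema) : Schema where
  Rel := D.Rel ⊕ D.Rel
  relFin := inferInstance
  arity := Sum.elim D.arity D.arity

/-- The disjunctive join `I ⊕ J`: unprimed symbols are interpreted as in `I`,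
primed symbols as in `J`. -/
def Inst.oplus {D : Schema} {U : Type} (I J : Inst D U) : Inst D.double U where
  rel := fun r => match r with
    | .inl r₀ => I.rel r₀
    | .inr r₀ => J.rel r₀
  finite := fun r => by
    cases r with
    | inl r₀ => exact I.finite r₀
    | inr r₀ => exact J.finite r₀

/-- Image of an instance under a map of domains. -/
def Inst.map {D : Schema} {C U : Type} (f : C → U) (I : Inst D C) : Inst D U where
  rel := fun r => (fun t => f ∘ t) '' I.rel r
  finite := fun r => (I.finite r).image _

/-! ### First-order formulas -/

/-- Terms: variables (natural numbers) or constants from `C`. -/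
abbrev Term (C : Type) := ℕ ⊕ C

def Term.varsF {C : Type} : Term C → Finset ℕ
  | .inl x => {x}
  | .inr _ => ∅

def Term.constsS {C : Type} : Term C → Set C
  | .inl _ => ∅
  | .inr c => {c}

def Term.val {C U : Type} (cst : C → U) (σ : ℕ → U) : Term C → U
  | .inl x => σ x
  | .inr c => cst c

/-- First-order formulas over schema `D`, with equality, constants from `C`
and no function symbols. -/
inductive FO (D : Schema) (C : Type) : Type where
  | eq : Term C → Term C → FO D C
  | rel : (r : D.Rel) → (Fin (D.arity r) → Term C) → FO D C
  | not : FO D C → FO D C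
  | imp : FO D C → FO D C → FO D C
  | all : ℕ → FO D C → FO D C

namespace FO

variable {D : Schema} {C : Type}

/-- Free variables. -/
def free : FO D C → Finset ℕ
  | .eq t₁ t₂ => t₁.varsF ∪ t₂.varsF
  | .rel _ ts => Finset.univ.biUnion fun j => (ts j).varsF
  | .not φ => φ.free
  | .imp φ ψ => φ.free ∪ ψ.free
  | .all x φ => φ.free.erase x

/-- All variables. -/
def vars : FO D C → Finset ℕ
  | .eq t₁ t₂ => t₁.varsF ∪ t₂.varsF
  | .rel _ ts => Finset.univ.biUnion fun j => (ts j).varsF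
  | .not φ => φ.vars
  | .imp φ ψ => φ.vars ∪ ψ.vars
  | .all x φ => insert x φ.vars

/-- Constants mentioned in a formula. -/
def consts : FO D C → Set C
  | .eq t₁ t₂ => t₁.constsS ∪ t₂.constsS
  | .rel _ ts => ⋃ j, (ts j).constsS
  | .not φ => φ.consts
  | .imp φ ψ => φ.consts ∪ ψ.consts
  | .all _ φ => φ.consts

/-- The formula mentions only relation symbols from `R`. -/
def UsesOnly (R : Set D.Rel) : FO D C → Prop
  | .eq _ _ => True
  | .rel r _ => r ∈ R
  | .not φ => φ.UsesOnly R
  | .imp φ ψ => φ.UsesOnly R ∧ ψ.UsesOnly R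
  | .all _ φ => φ.UsesOnly R

/-- Satisfaction of FO-formulas, with active-domain quantification. -/
def sat {U : Type} (cst : C → U) (I : Inst D U) : (ℕ → U) → FO D C → Prop
  | σ, .eq t₁ t₂ => t₁.val cst σ = t₂.val cst σ
  | σ, .rel r ts => (fun j => (ts j).val cst σ) ∈ I.rel r
  | σ, .not φ => ¬ sat cst I σ φ
  | σ, .imp φ ψ => sat cst I σ φ → sat cst I σ ψ
  | σ, .all x φ => ∀ u ∈ I.adom, sat cst I (Function.update σ x u) φ

end FO

/-! ### Agents and AC-MAS -/

/-- The signature of an agent: a finite set of action types with parameter counts. -/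
structure AgentSig : Type 1 where
  Act : Type
  [actFin : Fintype Act]
  np : Act → ℕ

attribute [instance] AgentSig.actFin

/-- A ground action: an action type together with ground parameters. -/
def GAct (g : AgentSig) (U : Type) : Type := Σ a : g.Act, Fin (g.np a) → U

/-- Renaming of ground-action parameters. -/
def GAct.map {g : AgentSig} {U U' : Type} (f : U → U') : GAct g U → GAct g U'
  | ⟨a, u⟩ => ⟨a, fun j => f (u j)⟩

/-- An agent: local states structured as database instances, and a protocol. -/
structure Agent (D : Schema) (g : AgentSig) (U : Type) : Type where
  L : Set (Inst D U)
  Pr : Inst D U → Set (GAct g U)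

/-- A global state: one local database instance per agent `0, …, n`
(agent `0` is the environment). -/
abbrev GState (D : Schema) (n : ℕ) (U : Type) := Fin (n+1) → Inst D U

/-- A joint (global) ground action. -/
abbrev JAct {n : ℕ} (sig : Fin (n+1) → AgentSig) (U : Type) : Type := ∀ i, GAct (sig i) U

def JAct.map {n : ℕ} {sig : Fin (n+1) → AgentSig} {U U' : Type} (f : U → U')
    (a : JAct sig U) : JAct sig U' := fun i => (a i).map f

/-- The set of individuals occurring as parameters of a joint ground action. -/
def actElems {n : ℕ} {sig : Fin (n+1) → AgentSig} {U : Type} (a : JAct sig U) : Set U :=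
  { u | ∃ (i : Fin (n+1)) (j : Fin ((sig i).np (a i).1)), (a i).2 j = u }

/-- Active domain of a family of instances (e.g. a global state). -/
def adomF {D : Schema} {X U : Type} (s : X → Inst D U) : Set U := ⋃ i, (s i).adom

/-- The global instance `D_s` associated with a global state. -/
def gInst {D : Schema} {n : ℕ} {U : Type} (s : GState D n U) : Inst D U where
  rel := fun r => ⋃ i, (s i).rel r
  finite := fun r => Set.finite_iUnion fun i => (s i).finite r

/-- Componentwise disjunctive join of two global states. -/
def oplusG {D : Schema} {n : ℕ} {U : Type} (s t : GState D n U) : GState D.double n U :=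
  fun i => (s i).oplus (t i)

/-- An artifact-centric multi-agent system. -/
structure ACMAS (D : Schema) {n : ℕ} (sig : Fin (n+1) → AgentSig) {U : Type}
    (Ag : ∀ i, Agent D (sig i) U) : Type where
  /-- set of (reachable) global states -/
  S : Set (GState D n U)
  /-- initial global state -/
  s0 : GState D n U
  s0_mem : s0 ∈ S
  states_local : ∀ s ∈ S, ∀ i, s i ∈ (Ag i).L
  /-- global transition function -/
  τ : GState D n U → JAct sig U → Set (GState D n U)
  /-- `τ` is defined only on protocol-enabled joint actions -/
  tau_enabled : ∀ s a, (τ s a).Nonempty → ∀ i, a i ∈ (Ag i).Pr (s i)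
  tau_closed : ∀ s ∈ S, ∀ a, τ s a ⊆ S

namespace ACMAS

variable {D : Schema} {n : ℕ} {sig : Fin (n+1) → AgentSig} {U : Type}
  {Ag : ∀ i, Agent D (sig i) U}

/-- The transition relation `s → t`. -/
def Tr (M : ACMAS D sig Ag) (s t : GState D n U) : Prop := ∃ a, t ∈ M.τ s a

/-- Epistemic indistinguishability for agent `i`. -/
def Epi (M : ACMAS D sig Ag) (i : Fin (n+1)) (s t : GState D n U) : Prop :=
  s ∈ M.S ∧ t ∈ M.S ∧ s i = t i

/-- Union of the epistemic relations of agents `1, …, n`. -/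
def EpiAny (M : ACMAS D sig Ag) (s t : GState D n U) : Prop :=
  ∃ i : Fin n, M.Epi i.succ s t

/-- The standard assumptions: the transition relation is serial and `S` is
exactly the set of states reachable from `s0`. -/
def Std (M : ACMAS D sig Ag) : Prop :=
  (∀ s ∈ M.S, ∃ t, M.Tr s t) ∧ M.S = { s | Relation.ReflTransGen M.Tr M.s0 s }

/-- An (infinite) run. -/
def IsRun (M : ACMAS D sig Ag) (r : ℕ → GState D n U) : Prop :=
  (∀ k, r k ∈ M.S) ∧ ∀ k, M.Tr (r k) (r (k+1))

/-- A temporal-epistemic run. -/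
def IsTERun (M : ACMAS D sig Ag) (r : ℕ → GState D n U) : Prop :=
  (∀ k, r k ∈ M.S) ∧ ∀ k, M.Tr (r k) (r (k+1)) ∨ M.EpiAny (r k) (r (k+1))

end ACMAS

/-! ### Isomorphisms and equivalent assignments -/

/-- `ι` is a witness for the isomorphism of the families `s` and `s'`:
a constant-preserving bijection between the active domains extended with the
constants, preserving all relations componentwise. -/
def IsWitness {D : Schema} {X C U U' : Type} (cst : C → U) (cst' : C → U')
    (ι : U → U') (s : X → Inst D U) (s' : X → Inst D U') : Prop :=
  Set.BijOn ι (adomF s ∪ Set.range cst) (adomF s' ∪ Set.range cst') ∧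
  (∀ c, ι (cst c) = cst' c) ∧
  ∀ (i : X) (r : D.Rel) (t : Fin (D.arity r) → U),
    (∀ j, t j ∈ adomF s ∪ Set.range cst) →
    (t ∈ (s i).rel r ↔ (fun j => ι (t j)) ∈ (s' i).rel r)

/-- Isomorphism of families of instances (in particular global states). -/
def Iso {D : Schema} {X C U U' : Type} (cst : C → U) (cst' : C → U')
    (s : X → Inst D U) (s' : X → Inst D U') : Prop :=
  ∃ ι, IsWitness cst cst' ι s s'

/-- Equivalent assignments for a set `V` of variables w.r.t. `s` and `s'`. -/
def EqAssign {D : Schema} {n : ℕ} {C U U' : Type} (cst : C → U) (cst' : C → U')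
    (V : Set ℕ) (σ : ℕ → U) (σ' : ℕ → U')
    (s : GState D n U) (s' : GState D n U') : Prop :=
  ∃ γ : U → U',
    Set.BijOn γ (adomF s ∪ Set.range cst ∪ σ '' V)
      (adomF s' ∪ Set.range cst' ∪ σ' '' V) ∧
    IsWitness cst cst' γ s s' ∧
    ∀ x ∈ V, σ' x = γ (σ x)

/-! ### Simulations and bisimulations -/

section Bisim

variable {D : Schema} {n : ℕ} {sig sig' : Fin (n+1) → AgentSig} {C U U' : Type}
  {Ag : ∀ i, Agent D (sig i) U} {Ag' : ∀ i, Agent D (sig' i) U'}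

/-- Simulation between two AC-MAS. -/
def IsSim (cst : C → U) (cst' : C → U')
    (M : ACMAS D sig Ag) (M' : ACMAS D sig' Ag')
    (R : GState D n U → GState D n U' → Prop) : Prop :=
  ∀ s s', R s s' →
    s ∈ M.S ∧ s' ∈ M'.S ∧ Iso cst cst' s s' ∧
    ∀ t, M.Tr s t → ∃ t', M'.Tr s' t' ∧ R t t'

/-- Bisimulation. -/
def IsBisim (cst : C → U) (cst' : C → U')
    (M : ACMAS D sig Ag) (M' : ACMAS D sig' Ag')
    (R : GState D n U → GState D n U' → Prop) : Prop :=
  IsSim cst cst' M M' R ∧ IsSim cst' cst M' M (fun s' s => R s s')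

/-- Bisimilarity of states. -/
def Bisimilar (cst : C → U) (cst' : C → U')
    (M : ACMAS D sig Ag) (M' : ACMAS D sig' Ag')
    (s : GState D n U) (s' : GState D n U') : Prop :=
  ∃ R, IsBisim cst cst' M M' R ∧ R s s'

/-- `P ≈ P'`: the two systems are bisimilar. -/
def BisimSys (cst : C → U) (cst' : C → U')
    (M : ACMAS D sig Ag) (M' : ACMAS D sig' Ag') : Prop :=
  Bisimilar cst cst' M M' M.s0 M'.s0

/-- ⊕-simulation. -/
def IsOSim (cst : C → U) (cst' : C → U')
    (M : ACMAS D sig Ag) (M' : ACMAS D sig' Ag')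
    (R : GState D n U → GState D n U' → Prop) : Prop :=
  ∀ s s', R s s' →
    s ∈ M.S ∧ s' ∈ M'.S ∧ Iso cst cst' s s' ∧
    (∀ t, M.Tr s t → ∃ t', M'.Tr s' t' ∧
        Iso cst cst' (oplusG s t) (oplusG s' t') ∧ R t t') ∧
    (∀ (t : GState D n U) (i : Fin n), M.Epi i.succ s t →
        ∃ t', M'.Epi i.succ s' t' ∧
          Iso cst cst' (oplusG s t) (oplusG s' t') ∧ R t t')

/-- ⊕-bisimulation. -/
def IsOBisim (cst : C → U) (cst' : C → U')
    (M : ACMAS D sig Ag) (M' : ACMAS D sig' Ag')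
    (R : GState D n U → GState D n U' → Prop) : Prop :=
  IsOSim cst cst' M M' R ∧ IsOSim cst' cst M' M (fun s' s => R s s')

/-- ⊕-bisimilarity of states. -/
def OBisimilar (cst : C → U) (cst' : C → U')
    (M : ACMAS D sig Ag) (M' : ACMAS D sig' Ag')
    (s : GState D n U) (s' : GState D n U') : Prop :=
  ∃ R, IsOBisim cst cst' M M' R ∧ R s s'

/-- The two systems are ⊕-bisimilar. -/
def OBisimSys (cst : C → U) (cst' : C → U')
    (M : ACMAS D sig Ag) (M' : ACMAS D sig' Ag') : Prop :=
  OBisimilar cst cst' M M' M.s0 M'.s0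

end Bisim

/-! ### Uniformity and boundedness -/

section Uniform

variable {D : Schema} {n : ℕ} {sig : Fin (n+1) → AgentSig} {C U : Type}
  {Ag : ∀ i, Agent D (sig i) U}

/-- Temporal condition (1) of uniformity. -/
def UniformT (cst : C → U) (M : ACMAS D sig Ag) : Prop :=
  ∀ s ∈ M.S, ∀ t ∈ M.S, ∀ s' ∈ M.S, ∀ (t' : GState D n U) (a : JAct sig U),
    t ∈ M.τ s a →
    ∀ ι : U → U, IsWitness cst cst ι (oplusG s t) (oplusG s' t') →
    ∀ ι' : U → U,
      (∀ u ∈ adomF (oplusG s t) ∪ Set.range cst, ι' u = ι u) →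
      Set.InjOn ι' (adomF (oplusG s t) ∪ Set.range cst ∪ actElems a) →
      (∀ c, ι' (cst c) = cst c) →
      t' ∈ M.τ s' (JAct.map ι' a)

/-- Epistemic condition (2) of uniformity. -/
def UniformE (cst : C → U) (M : ACMAS D sig Ag) : Prop :=
  ∀ s ∈ M.S, ∀ t ∈ M.S, ∀ s' ∈ M.S, ∀ (t' : GState D n U) (i : Fin n),
    M.Epi i.succ s t → Iso cst cst (oplusG s t) (oplusG s' t') →
    M.Epi i.succ s' t'

/-- Uniform AC-MAS. -/
def Uniform (cst : C → U) (M : ACMAS D sig Ag) : Prop :=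
  UniformT cst M ∧ UniformE cst M

/-- `b`-bounded AC-MAS: no reachable state has more than `b` distinct elements
in its active domain. -/
def BBounded (M : ACMAS D sig Ag) (b : ℕ) : Prop :=
  ∀ s ∈ M.S, (adomF s).Finite ∧ (adomF s).ncard ≤ b

end Uniform

/-- `N_Ag`: the sum over the agents of the maximal number of parameters of
their action types. -/
def NAg {n : ℕ} (sig : Fin (n+1) → AgentSig) : ℕ :=
  ∑ i, Finset.univ.sup (sig i).np

/-! ### Abstractions -/

section Abstraction

variable {D : Schema} {n : ℕ} {sig : Fin (n+1) → AgentSig} {C U U' : Type}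
  {Ag : ∀ i, Agent D (sig i) U} {Ag' : ∀ i, Agent D (sig i) U'}

/-- `A'` is the abstract agent corresponding to `A`, over the domain `U'`. -/
def IsAbstractAgent {g : AgentSig} (cst : C → U) (cst' : C → U')
    (A : Agent D g U) (A' : Agent D g U') : Prop :=
  ∀ (l' : Inst D U') (α' : GAct g U'), α' ∈ A'.Pr l' ↔
    ∃ l ∈ A.L, ∃ α ∈ A.Pr l, ∃ ι : U → U',
      IsWitness cst cst' ι (fun _ : PUnit => l) (fun _ : PUnit => l') ∧
      ∃ ι' : U → U',
        (∀ u ∈ l.adom ∪ Set.range cst, ι' u = ι u) ∧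
        Set.InjOn ι' (l.adom ∪ Set.range cst ∪ Set.range α.2) ∧
        α' = α.map ι'

/-- `M'` is an abstraction of `M` (over the abstract agents `Ag'`). -/
def IsAbstraction (cst : C → U) (cst' : C → U')
    (M : ACMAS D sig Ag) (M' : ACMAS D sig Ag') : Prop :=
  (∀ i, IsAbstractAgent cst cst' (Ag i) (Ag' i)) ∧
  Iso cst' cst M'.s0 M.s0 ∧
  ∀ (s' t' : GState D n U') (a' : JAct sig U'),
    t' ∈ M'.τ s' a' ↔
      ∃ s ∈ M.S, ∃ t ∈ M.S, ∃ a : JAct sig U, t ∈ M.τ s a ∧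
        ∃ ι : U → U', IsWitness cst cst' ι s s' ∧ IsWitness cst cst' ι t t' ∧
          ∃ ι' : U → U',
            (∀ u ∈ adomF s ∪ adomF t ∪ Set.range cst, ι' u = ι u) ∧
            Set.InjOn ι' (adomF s ∪ adomF t ∪ Set.range cst ∪ actElems a) ∧
            a' = JAct.map ι' a

/-- `M'` is a ⊕-abstraction of `M` (over the abstract agents `Ag'`).
The requirement `s0' = s0` is rendered, across the two interpretation
domains, as: the initial states are isomorphic and `adom(s0) ⊆ C`. -/
def IsOAbstraction (cst : C → U) (cst' : C → U')
    (M : ACMAS D sig Ag) (M' : ACMAS D sig Ag') : Prop :=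
  (∀ i, IsAbstractAgent cst cst' (Ag i) (Ag' i)) ∧
  (Iso cst cst' M.s0 M'.s0 ∧ adomF M.s0 ⊆ Set.range cst) ∧
  ∀ (s' t' : GState D n U') (a' : JAct sig U'),
    t' ∈ M'.τ s' a' ↔
      ∃ s ∈ M.S, ∃ t ∈ M.S, ∃ a : JAct sig U, t ∈ M.τ s a ∧
        ∃ ι : U → U',
          IsWitness cst cst' ι (oplusG s t) (oplusG s' t') ∧
          ∃ ι' : U → U',
            (∀ u ∈ adomF (oplusG s t) ∪ Set.range cst, ι' u = ι u) ∧
            Set.InjOn ι' (adomF (oplusG s t) ∪ Set.range cst ∪ actElems a) ∧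
            a' = JAct.map ι' a

end Abstraction

/-! ### Temporal-epistemic specification languages -/

/-- Sentence-atomic FO-CTL formulas. -/
inductive SAFOCTL (D : Schema) (C : Type) : Type where
  | atom : (ψ : FO D C) → ψ.free = ∅ → SAFOCTL D C
  | not : SAFOCTL D C → SAFOCTL D C
  | imp : SAFOCTL D C → SAFOCTL D C → SAFOCTL D C
  | ax : SAFOCTL D C → SAFOCTL D C
  | au : SAFOCTL D C → SAFOCTL D C → SAFOCTL D C
  | eu : SAFOCTL D C → SAFOCTL D C → SAFOCTL D C

/-- Satisfaction of SA-FO-CTL formulas at a global state. -/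
def SAFOCTL.sat {D : Schema} {C : Type} {n : ℕ} {sig : Fin (n+1) → AgentSig}
    {U : Type} {Ag : ∀ i, Agent D (sig i) U}
    (cst : C → U) (M : ACMAS D sig Ag) :
    SAFOCTL D C → GState D n U → Prop
  | .atom ψ _, s => ∀ σ, FO.sat cst (gInst s) σ ψ
  | .not φ, s => ¬ SAFOCTL.sat cst M φ s
  | .imp φ ψ, s => SAFOCTL.sat cst M φ s → SAFOCTL.sat cst M ψ s
  | .ax φ, s => ∀ r, M.IsRun r → r 0 = s → SAFOCTL.sat cst M φ (r 1)
  | .au φ ψ, s => ∀ r, M.IsRun r → r 0 = s →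
      ∃ k, SAFOCTL.sat cst M ψ (r k) ∧ ∀ j < k, SAFOCTL.sat cst M φ (r j)
  | .eu φ ψ, s => ∃ r, M.IsRun r ∧ r 0 = s ∧
      ∃ k, SAFOCTL.sat cst M ψ (r k) ∧ ∀ j < k, SAFOCTL.sat cst M φ (r j)

/-- `P ⊨ φ` for SA-FO-CTL. -/
def SAFOCTL.satM {D : Schema} {C : Type} {n : ℕ} {sig : Fin (n+1) → AgentSig}
    {U : Type} {Ag : ∀ i, Agent D (sig i) U}
    (cst : C → U) (M : ACMAS D sig Ag) (φ : SAFOCTL D C) : Prop :=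
  SAFOCTL.sat cst M φ M.s0

/-- FO-CTLK formulas, with epistemic operators for agents `1, …, n` and
common knowledge. -/
inductive FOCTLK (D : Schema) (C : Type) (n : ℕ) : Type where
  | atom : FO D C → FOCTLK D C n
  | not : FOCTLK D C n → FOCTLK D C n
  | imp : FOCTLK D C n → FOCTLK D C n → FOCTLK D C n
  | all : ℕ → FOCTLK D C n → FOCTLK D C n
  | ax : FOCTLK D C n → FOCTLK D C n
  | au : FOCTLK D C n → FOCTLK D C n → FOCTLK D C n
  | eu : FOCTLK D C n → FOCTLK D C n → FOCTLK D C n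
  | know : Fin n → FOCTLK D C n → FOCTLK D C n
  | ck : FOCTLK D C n → FOCTLK D C n

namespace FOCTLK

variable {D : Schema} {C : Type} {n : ℕ}

def free : FOCTLK D C n → Finset ℕ
  | .atom ψ => ψ.free
  | .not φ => φ.free
  | .imp φ ψ => φ.free ∪ ψ.free
  | .all x φ => φ.free.erase x
  | .ax φ => φ.free
  | .au φ ψ => φ.free ∪ ψ.free
  | .eu φ ψ => φ.free ∪ ψ.free
  | .know _ φ => φ.free
  | .ck φ => φ.free

def vars : FOCTLK D C n → Finset ℕ
  | .atom ψ => ψ.vars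
  | .not φ => φ.vars
  | .imp φ ψ => φ.vars ∪ ψ.vars
  | .all x φ => insert x φ.vars
  | .ax φ => φ.vars
  | .au φ ψ => φ.vars ∪ ψ.vars
  | .eu φ ψ => φ.vars ∪ ψ.vars
  | .know _ φ => φ.vars
  | .ck φ => φ.vars

/-- Satisfaction `(P, s, σ) ⊨ φ` of FO-CTLK formulas. -/
def sat {sig : Fin (n+1) → AgentSig} {U : Type} {Ag : ∀ i, Agent D (sig i) U}
    (cst : C → U) (M : ACMAS D sig Ag) :
    FOCTLK D C n → GState D n U → (ℕ → U) → Prop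
  | .atom ψ, s, σ => FO.sat cst (gInst s) σ ψ
  | .not φ, s, σ => ¬ sat cst M φ s σ
  | .imp φ ψ, s, σ => sat cst M φ s σ → sat cst M ψ s σ
  | .all x φ, s, σ => ∀ u ∈ adomF s, sat cst M φ s (Function.update σ x u)
  | .ax φ, s, σ => ∀ r, M.IsRun r → r 0 = s → sat cst M φ (r 1) σ
  | .au φ ψ, s, σ => ∀ r, M.IsRun r → r 0 = s →
      ∃ k, sat cst M ψ (r k) σ ∧ ∀ j < k, sat cst M φ (r j) σ
  | .eu φ ψ, s, σ => ∃ r, M.IsRun r ∧ r 0 = s ∧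
      ∃ k, sat cst M ψ (r k) σ ∧ ∀ j < k, sat cst M φ (r j) σ
  | .know i φ, s, σ => ∀ t, M.Epi i.succ s t → sat cst M φ t σ
  | .ck φ, s, σ => ∀ t, Relation.TransGen M.EpiAny s t → sat cst M φ t σ

/-- `P ⊨ φ` for FO-CTLK: satisfaction at the initial state under every
assignment. -/
def satM {sig : Fin (n+1) → AgentSig} {U : Type} {Ag : ∀ i, Agent D (sig i) U}
    (cst : C → U) (M : ACMAS D sig Ag) (φ : FOCTLK D C n) : Prop :=
  ∀ σ : ℕ → U, sat cst M φ M.s0 σ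

end FOCTLK

/-- FO-ECTLK: the existential fragment. -/
inductive FOECTLK (D : Schema) (C : Type) (n : ℕ) : Type where
  | atom : FO D C → FOECTLK D C n
  | and : FOECTLK D C n → FOECTLK D C n → FOECTLK D C n
  | or : FOECTLK D C n → FOECTLK D C n → FOECTLK D C n
  | all : ℕ → FOECTLK D C n → FOECTLK D C n
  | ex : ℕ → FOECTLK D C n → FOECTLK D C n
  | enext : FOECTLK D C n → FOECTLK D C n
  | eu : FOECTLK D C n → FOECTLK D C n → FOECTLK D C n
  | dknow : Fin n → FOECTLK D C n → FOECTLK D C n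
  | dck : FOECTLK D C n → FOECTLK D C n

/-- Satisfaction of FO-ECTLK formulas. -/
def FOECTLK.sat {D : Schema} {C : Type} {n : ℕ} {sig : Fin (n+1) → AgentSig}
    {U : Type} {Ag : ∀ i, Agent D (sig i) U}
    (cst : C → U) (M : ACMAS D sig Ag) :
    FOECTLK D C n → GState D n U → (ℕ → U) → Prop
  | .atom ψ, s, σ => FO.sat cst (gInst s) σ ψ
  | .and φ ψ, s, σ => FOECTLK.sat cst M φ s σ ∧ FOECTLK.sat cst M ψ s σ
  | .or φ ψ, s, σ => FOECTLK.sat cst M φ s σ ∨ FOECTLK.sat cst M ψ s σ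
  | .all x φ, s, σ => ∀ u ∈ adomF s, FOECTLK.sat cst M φ s (Function.update σ x u)
  | .ex x φ, s, σ => ∃ u ∈ adomF s, FOECTLK.sat cst M φ s (Function.update σ x u)
  | .enext φ, s, σ => ∃ r, M.IsRun r ∧ r 0 = s ∧ FOECTLK.sat cst M φ (r 1) σ
  | .eu φ ψ, s, σ => ∃ r, M.IsRun r ∧ r 0 = s ∧
      ∃ k, FOECTLK.sat cst M ψ (r k) σ ∧ ∀ j < k, FOECTLK.sat cst M φ (r j) σ
  | .dknow i φ, s, σ => ∃ t, M.Epi i.succ s t ∧ FOECTLK.sat cst M φ t σ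
  | .dck φ, s, σ => ∃ t, Relation.TransGen M.EpiAny s t ∧ FOECTLK.sat cst M φ t σ

/-- `P ⊨ φ` for FO-ECTLK. -/
def FOECTLK.satM {D : Schema} {C : Type} {n : ℕ} {sig : Fin (n+1) → AgentSig}
    {U : Type} {Ag : ∀ i, Agent D (sig i) U}
    (cst : C → U) (M : ACMAS D sig Ag) (φ : FOECTLK D C n) : Prop :=
  ∀ σ : ℕ → U, FOECTLK.sat cst M φ M.s0 σ

/-- `Mb` is the `b`-restriction of `M`. -/
def IsBRestriction {D : Schema} {n : ℕ} {sig : Fin (n+1) → AgentSig} {U : Type}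
    {Ag : ∀ i, Agent D (sig i) U} (Mb M : ACMAS D sig Ag) (b : ℕ) : Prop :=
  Mb.s0 = M.s0 ∧
  Mb.S = { s ∈ M.S | (adomF s).Finite ∧ (adomF s).ncard ≤ b } ∧
  ∀ s a, Mb.τ s a = { t ∈ M.τ s a | s ∈ Mb.S ∧ t ∈ Mb.S }

/-! ### Artifact-centric programs -/

/-- A declarative artifact-centric program. -/
structure ACProgram (D : Schema) (C : Type) {n : ℕ} (sig : Fin (n+1) → AgentSig) where
  /-- local database schemas, as sets of relation symbols -/
  locRel : Fin (n+1) → Set D.Rel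
  locDisj : ∀ i j, i ≠ j → Disjoint (locRel i) (locRel j)
  /-- initial local states; their values are constants -/
  l0 : ∀ _ : Fin (n+1), Inst D C
  l0_loc : ∀ i r, r ∉ locRel i → (l0 i).rel r = ∅
  /-- preconditions: FO-formulas over the local schema whose free variables
  are among the action parameters -/
  pre : ∀ i, (sig i).Act → FO D C
  /-- postconditions: FO-formulas over the global schema and its primed copy -/
  post : ∀ i, (sig i).Act → FO D.double C
  pre_free : ∀ i a, ↑(pre i a).free ⊆ { x : ℕ | x < (sig i).np a }
  post_free : ∀ i a, ↑(post i a).free ⊆ { x : ℕ | x < (sig i).np a }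
  pre_loc : ∀ i a, (pre i a).UsesOnly (locRel i)

namespace ACProgram

variable {D : Schema} {C : Type} {n : ℕ} {sig : Fin (n+1) → AgentSig}

/-- The constants mentioned in the program. -/
def progConsts (P : ACProgram D C sig) : Set C :=
  (⋃ i, (P.l0 i).adom) ∪
  ⋃ i, ⋃ a : (sig i).Act, ((P.pre i a).consts ∪ (P.post i a).consts)

/-- Ground values of the postcondition parameters of a joint ground action. -/
def postElems (P : ACProgram D C sig) {U : Type} (a : JAct sig U) : Set U :=
  { u | ∃ (i : Fin (n+1)) (j : Fin ((sig i).np (a i).1)),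
      (j : ℕ) ∈ (P.post i (a i).1).free ∧ (a i).2 j = u }

/-- The agent induced by the program for index `i`. -/
def InducedAgent {U : Type} (cst : C → U) (P : ACProgram D C sig) (i : Fin (n+1))
    (A : Agent D (sig i) U) : Prop :=
  A.L = { l : Inst D U | ∀ r, r ∉ P.locRel i → l.rel r = ∅ } ∧
  ∀ (l : Inst D U) (α : GAct (sig i) U), α ∈ A.Pr l ↔
    ∀ σ : ℕ → U, (∀ j : Fin ((sig i).np α.1), σ (j : ℕ) = α.2 j) →
      FO.sat cst l σ (P.pre i α.1)

/-- The transitions induced by the program. -/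
def InducedTrans {U : Type} (cst : C → U) (P : ACProgram D C sig)
    (s t : GState D n U) (a : JAct sig U) : Prop :=
  (∀ i, ∀ σ : ℕ → U, (∀ j : Fin ((sig i).np (a i).1), σ (j : ℕ) = (a i).2 j) →
      FO.sat cst (s i) σ (P.pre i (a i).1)) ∧
  adomF t ⊆ adomF s ∪ P.postElems a ∪ cst '' (⋃ i, (P.post i (a i).1).consts) ∧
  (∀ i, ∀ σ : ℕ → U, (∀ j : Fin ((sig i).np (a i).1), σ (j : ℕ) = (a i).2 j) →
      FO.sat cst ((gInst s).oplus (gInst t)) σ (P.post i (a i).1))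

/-- `M` is the AC-MAS induced by the program `P` (the transition relation is
assumed to be serial). -/
def InducedACMAS {U : Type} (cst : C → U) (P : ACProgram D C sig)
    (Ag : ∀ i, Agent D (sig i) U) (M : ACMAS D sig Ag) : Prop :=
  (∀ i, P.InducedAgent cst i (Ag i)) ∧
  M.s0 = (fun i => (P.l0 i).map cst) ∧
  (∀ s t a, t ∈ M.τ s a ↔ P.InducedTrans cst s t a) ∧
  M.Std

end ACProgram


open Set

section AuxBasic

variable {D : Schema} {X C U U' V W : Type}

lemma Inst.ext' {I J : Inst D U} (h : I.rel = J.rel) : I = J := by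
  cases I; cases J; simp_all

lemma Inst.mem_adom {I : Inst D U} {r : D.Rel} {t : Fin (D.arity r) → U} (ht : t ∈ I.rel r)
    (j : Fin (D.arity r)) : t j ∈ I.adom := ⟨r, t, ht, j, rfl⟩

lemma Inst.adom_finite (I : Inst D U) : I.adom.Finite := by
  have h : I.adom = ⋃ r, ⋃ t ∈ I.rel r, Set.range t := by
    ext u
    simp only [Inst.adom, Set.mem_setOf_eq, Set.mem_iUnion, Set.mem_range]
    constructor
    · rintro ⟨r, t, ht, j, rfl⟩; exact ⟨r, t, ht, j, rfl⟩
    · rintro ⟨r, t, ht, j, rfl⟩; exact ⟨r, t, ht, j, rfl⟩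
  rw [h]
  exact Set.finite_iUnion fun r => (I.finite r).biUnion fun t _ => Set.finite_range t

lemma Inst.adom_map (g : U → U') (I : Inst D U) : (I.map g).adom = g '' I.adom := by
  ext u
  constructor
  · rintro ⟨r, t', ⟨t, ht, rfl⟩, j, rfl⟩
    exact ⟨t j, Inst.mem_adom ht j, rfl⟩
  · rintro ⟨v, ⟨r, t, ht, j, rfl⟩, rfl⟩
    exact ⟨r, g ∘ t, ⟨t, ht, rfl⟩, j, rfl⟩

lemma Inst.map_map (g : U → V) (g' : V → W) (I : Inst D U) :
    (I.map g).map g' = I.map (g' ∘ g) := by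
  apply Inst.ext'; funext r
  show (fun t => g' ∘ t) '' ((fun t => g ∘ t) '' (I.rel r)) = _
  rw [Set.image_image]
  rfl

lemma Inst.map_congr {g g' : U → U'} {I : Inst D U} (h : Set.EqOn g g' I.adom) :
    I.map g = I.map g' := by
  apply Inst.ext'; funext r; ext t'
  constructor
  · rintro ⟨t, ht, rfl⟩
    exact ⟨t, ht, funext fun j => (h (Inst.mem_adom ht j)).symm⟩
  · rintro ⟨t, ht, rfl⟩
    exact ⟨t, ht, funext fun j => h (Inst.mem_adom ht j)⟩

lemma Inst.map_id' {g : U → U} {I : Inst D U} (h : Set.EqOn g id I.adom) : I.map g = I := by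
  apply Inst.ext'; funext r; ext t
  constructor
  · rintro ⟨t₀, ht₀, rfl⟩
    have ht : g ∘ t₀ = t₀ := funext fun j => h (Inst.mem_adom ht₀ j)
    show g ∘ t₀ ∈ I.rel r
    rwa [ht]
  · intro ht
    refine ⟨t, ht, ?_⟩
    show g ∘ t = t
    exact funext fun j => h (Inst.mem_adom ht j)

lemma mem_adomF {s : X → Inst D U} {i : X} {r : D.Rel} {t : Fin (D.arity r) → U}
    (ht : t ∈ (s i).rel r) (j : Fin (D.arity r)) : t j ∈ adomF s :=
  Set.mem_iUnion.2 ⟨i, Inst.mem_adom ht j⟩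

lemma adom_subset_adomF (s : X → Inst D U) (i : X) : (s i).adom ⊆ adomF s :=
  Set.subset_iUnion (fun i => (s i).adom) i

lemma adomF_finite [Finite X] (s : X → Inst D U) : (adomF s).Finite :=
  Set.finite_iUnion fun i => (s i).adom_finite

/-- Componentwise image of a family of instances. -/
def mapG (g : U → U') (s : X → Inst D U) : X → Inst D U' := fun i => (s i).map g

lemma adomF_mapG (g : U → U') (s : X → Inst D U) : adomF (mapG g s) = g '' (adomF s) := by
  simp [adomF, mapG, Inst.adom_map, Set.image_iUnion]

lemma mapG_comp (g : U → V) (g' : V → W) (s : X → Inst D U) :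
    mapG g' (mapG g s) = mapG (g' ∘ g) s :=
  funext fun i => Inst.map_map g g' (s i)

lemma mapG_congr {g g' : U → U'} {s : X → Inst D U} (h : Set.EqOn g g' (adomF s)) :
    mapG g s = mapG g' s :=
  funext fun i => Inst.map_congr (fun _ hu => h (adom_subset_adomF s i hu))

lemma mapG_id' {g : U → U} {s : X → Inst D U} (h : Set.EqOn g id (adomF s)) : mapG g s = s :=
  funext fun i => Inst.map_id' (fun _ hu => h (adom_subset_adomF s i hu))

lemma mapG_inv_id {κ : V → U} {g : U → V} {s : X → Inst D U} {A : Set U}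
    (h : ∀ u ∈ A, κ (g u) = u) (hA : adomF s ⊆ A) : mapG κ (mapG g s) = s := by
  rw [mapG_comp]; exact mapG_id' fun u hu => h u (hA hu)

lemma Inst.adom_oplus (I J : Inst D U) : (I.oplus J).adom = I.adom ∪ J.adom := by
  ext u; constructor
  · rintro ⟨r, t, ht, j, rfl⟩
    cases r with
    | inl r₀ => exact Or.inl ⟨r₀, t, ht, j, rfl⟩
    | inr r₀ => exact Or.inr ⟨r₀, t, ht, j, rfl⟩
  · rintro (⟨r, t, ht, j, rfl⟩ | ⟨r, t, ht, j, rfl⟩)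
    · exact ⟨Sum.inl r, t, ht, j, rfl⟩
    · exact ⟨Sum.inr r, t, ht, j, rfl⟩

variable {n : ℕ}

lemma adomF_oplusG {s t : GState D n U} : adomF (oplusG s t) = adomF s ∪ adomF t := by
  simp [adomF, oplusG, Inst.adom_oplus, Set.iUnion_union_distrib]

lemma oplusG_mapG (g : U → U') (s t : GState D n U) :
    oplusG (mapG g s) (mapG g t) = mapG g (oplusG s t) := by
  funext i; apply Inst.ext'; funext r
  cases r with
  | inl r₀ => rfl
  | inr r₀ => rfl

end AuxBasic

section OplusInj
variable {D : Schema} {U : Type} {n : ℕ}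

lemma oplusG_inj {s t s' t' : GState D n U}
    (h : oplusG s t = oplusG s' t') : s = s' ∧ t = t' := by
  constructor
  · funext i; apply Inst.ext'; funext r
    exact congrArg (fun I => I.rel (Sum.inl r)) (congrFun h i)
  · funext i; apply Inst.ext'; funext r
    exact congrArg (fun I => I.rel (Sum.inr r)) (congrFun h i)

end OplusInj


open Set

section GoodMapSec

variable {D : Schema} {X C U V W : Type}

/-- A constant-preserving map injective on `A` together with the constants. -/
def GoodMap (cst : C → U) (cstV : C → V) (A : Set U) (g : U → V) : Prop :=
  Set.InjOn g (A ∪ Set.range cst) ∧ ∀ c, g (cst c) = cstV c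

namespace GoodMap

variable {cst : C → U} {cstV : C → V} {cstW : C → W}

lemma mono {A B : Set U} {g : U → V} (h : GoodMap cst cstV B g) (hs : A ⊆ B) :
    GoodMap cst cstV A g :=
  ⟨h.1.mono (Set.union_subset_union_left _ hs), h.2⟩

lemma image_range {A : Set U} {g : U → V} (h : GoodMap cst cstV A g) :
    g '' Set.range cst = Set.range cstV := by
  rw [← Set.range_comp, show g ∘ cst = cstV from funext h.2]

lemma image_union_range {A : Set U} {g : U → V} (h : GoodMap cst cstV A g) :
    g '' (A ∪ Set.range cst) = g '' A ∪ Set.range cstV := by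
  rw [Set.image_union, h.image_range]

lemma comp {A : Set U} {B : Set V} {g : U → V} {g' : V → W}
    (hg : GoodMap cst cstV A g) (hg' : GoodMap cstV cstW B g') (him : g '' A ⊆ B) :
    GoodMap cst cstW A (g' ∘ g) := by
  refine ⟨hg'.1.comp hg.1 ?_, fun c => by
    simp only [Function.comp_apply, hg.2 c, hg'.2 c]⟩
  rintro u (hu | ⟨c, rfl⟩)
  · exact Or.inl (him ⟨u, hu, rfl⟩)
  · exact Or.inr ⟨c, (hg.2 c).symm⟩

lemma inv [Nonempty U] {A : Set U} {g : U → V} (h : GoodMap cst cstV A g) :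
    ∃ κ : V → U, (∀ u ∈ A ∪ Set.range cst, κ (g u) = u) ∧ GoodMap cstV cst (g '' A) κ := by
  set κ := Function.invFunOn g (A ∪ Set.range cst) with hκ
  have hleft : ∀ u ∈ A ∪ Set.range cst, κ (g u) = u := fun u hu =>
    h.1.leftInvOn_invFunOn hu
  refine ⟨κ, hleft, ?_, fun c => ?_⟩
  · rw [show g '' A ∪ Set.range cstV = g '' (A ∪ Set.range cst) from
      (h.image_union_range).symm]
    rintro x ⟨u, hu, rfl⟩ y ⟨v, hv, rfl⟩ hxy
    rw [hleft u hu, hleft v hv] at hxy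
    rw [hxy]
  · rw [← h.2 c]
    exact hleft _ (Or.inr ⟨c, rfl⟩)

end GoodMap

lemma goodMap_witness {cst : C → U} {cst' : C → V} {g : U → V} {s : X → Inst D U}
    (h : GoodMap cst cst' (adomF s) g) : IsWitness cst cst' g s (mapG g s) := by
  refine ⟨?_, h.2, fun i r t ht => ?_⟩
  · rw [adomF_mapG, ← h.image_union_range]
    exact h.1.bijOn_image
  · constructor
    · intro hm
      exact ⟨t, hm, rfl⟩
    · rintro ⟨t₂, ht₂, heq⟩
      have ht₂e : ∀ j, t₂ j ∈ adomF s ∪ Set.range cst := fun j => Or.inl (mem_adomF ht₂ j)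
      have h2 : t₂ = t := funext fun j => h.1 (ht₂e j) (ht j) (congrFun heq j)
      rwa [← h2]

lemma witness_goodMap {cst : C → U} {cst' : C → V} {ι : U → V} {s : X → Inst D U}
    {s' : X → Inst D V} (h : IsWitness cst cst' ι s s') :
    GoodMap cst cst' (adomF s) ι ∧ s' = mapG ι s := by
  obtain ⟨hbij, hc, hrel⟩ := h
  refine ⟨⟨hbij.injOn, hc⟩, funext fun i => Inst.ext' (funext fun r => Set.ext fun t' => ?_)⟩
  constructor
  · intro ht'
    have hsur : ∀ j, ∃ u ∈ adomF s ∪ Set.range cst, ι u = t' j := fun j =>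
      hbij.surjOn (Or.inl (mem_adomF ht' j))
    choose u hu hιu using hsur
    have hfe : (fun j => ι (u j)) = t' := funext hιu
    have hum : u ∈ (s i).rel r := (hrel i r u hu).2 (by rw [hfe]; exact ht')
    exact ⟨u, hum, funext hιu⟩
  · rintro ⟨t, ht, rfl⟩
    exact (hrel i r t (fun j => Or.inl (mem_adomF ht j))).1 ht

end GoodMapSec


open Set

section ExtSec

lemma mk_finite_set {α : Type} {s : Set α} (hs : s.Finite) :
    Cardinal.mk s = (s.ncard : Cardinal) := by
  haveI := hs.fintype
  rw [Cardinal.mk_fintype, ← Nat.card_coe_set_eq, Nat.card_eq_fintype_card]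

lemma exists_extension {U W : Type} [Nonempty W] (f : U → W) (A B : Set U) (hAB : A ⊆ B)
    (hB : B.Finite) (hf : Set.InjOn f A) (hcard : (B.ncard : Cardinal) ≤ Cardinal.mk W) :
    ∃ g : U → W, Set.EqOn g f A ∧ Set.InjOn g B := by
  classical
  have hA : A.Finite := hB.subset hAB
  have hdiff : (B \ A).Finite := hB.diff
  have himg : (f '' A).Finite := hA.image f
  have hle : Cardinal.mk (B \ A : Set U) ≤ Cardinal.mk ((f '' A)ᶜ : Set W) := by
    rcases finite_or_infinite W with hW | hW
    · haveI := Fintype.ofFinite W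
      have hmkW : Cardinal.mk W = ((Fintype.card W : ℕ) : Cardinal) := Cardinal.mk_fintype W
      have h1 : B.ncard ≤ Fintype.card W := by
        have := hcard
        rw [hmkW, Nat.cast_le] at this
        exact this
      have h2 : (f '' A).ncard + ((f '' A)ᶜ).ncard = Fintype.card W := by
        have := Set.ncard_add_ncard_compl (f '' A)
        rwa [Nat.card_eq_fintype_card] at this
      have h3 : (f '' A).ncard = A.ncard := Set.ncard_image_of_injOn hf
      have h4 : (B \ A).ncard = B.ncard - A.ncard := Set.ncard_diff hAB hA
      have h5 : A.ncard ≤ B.ncard := Set.ncard_le_ncard hAB hB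
      have h6 : (B \ A).ncard ≤ ((f '' A)ᶜ).ncard := by omega
      rw [mk_finite_set hdiff, mk_finite_set (Set.toFinite _)]
      exact_mod_cast h6
    · have hcompl : ((f '' A)ᶜ : Set W).Infinite := himg.infinite_compl
      haveI := hcompl.to_subtype
      exact le_trans hdiff.lt_aleph0.le (Cardinal.aleph0_le_mk _)
  obtain ⟨e⟩ := (Cardinal.le_def _ _).mp hle
  refine ⟨fun u => if hu : u ∈ B \ A then (e ⟨u, hu⟩ : W) else f u, ?_, ?_⟩
  · intro u hu
    simp only
    rw [dif_neg (fun h => h.2 hu)]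
  · intro x hx y hy hxy
    simp only at hxy
    by_cases hxA : x ∈ A <;> by_cases hyA : y ∈ A
    · rw [dif_neg (fun h => h.2 hxA), dif_neg (fun h => h.2 hyA)] at hxy
      exact hf hxA hyA hxy
    · rw [dif_neg (fun h => h.2 hxA), dif_pos (show y ∈ B \ A from ⟨hy, hyA⟩)] at hxy
      exact absurd ⟨x, hxA, hxy⟩ (e ⟨y, ⟨hy, hyA⟩⟩).2
    · rw [dif_pos (show x ∈ B \ A from ⟨hx, hxA⟩), dif_neg (fun h => h.2 hyA)] at hxy
      exact absurd ⟨y, hyA, hxy.symm⟩ (e ⟨x, ⟨hx, hxA⟩⟩).2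
    · rw [dif_pos (show x ∈ B \ A from ⟨hx, hxA⟩), dif_pos (show y ∈ B \ A from ⟨hy, hyA⟩)] at hxy
      exact congrArg Subtype.val (e.injective (Subtype.ext hxy))

lemma GoodMap.extend {C U W : Type} [Finite C] [Nonempty W] {cst : C → U} {cstW : C → W}
    {A B : Set U} {g : U → W} (h : GoodMap cst cstW A g) (hAB : A ⊆ B) (hB : B.Finite)
    (hcard : ((B ∪ Set.range cst).ncard : Cardinal) ≤ Cardinal.mk W) :
    ∃ g', GoodMap cst cstW B g' ∧ Set.EqOn g' g (A ∪ Set.range cst) := by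
  obtain ⟨g', he, hi⟩ := exists_extension g (A ∪ Set.range cst) (B ∪ Set.range cst)
    (Set.union_subset_union_left _ hAB) (hB.union (Set.finite_range cst)) h.1 hcard
  exact ⟨g', ⟨hi, fun c => (he (Or.inr ⟨c, rfl⟩)).trans (h.2 c)⟩, he⟩

/-- Extension lemma into an infinite domain. -/
lemma GoodMap.extendInf {C U W : Type} [Finite C] [Infinite W] {cst : C → U} {cstW : C → W}
    {A B : Set U} {g : U → W} (h : GoodMap cst cstW A g) (hAB : A ⊆ B) (hB : B.Finite) :
    ∃ g', GoodMap cst cstW B g' ∧ Set.EqOn g' g (A ∪ Set.range cst) :=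
  h.extend hAB hB ((Cardinal.nat_lt_aleph0 _).le.trans (Cardinal.aleph0_le_mk W))

end ExtSec


open Set

section CardSec

variable {C U U' : Type} {n : ℕ} {sig : Fin (n+1) → AgentSig}

lemma actElems_eq (a : JAct sig U) : actElems a = ⋃ i, Set.range (a i).2 := by
  ext u
  simp only [actElems, Set.mem_setOf_eq, Set.mem_iUnion, Set.mem_range]

lemma actElems_finite (a : JAct sig U) : (actElems a).Finite := by
  rw [actElems_eq]
  exact Set.finite_iUnion fun i => Set.finite_range _

lemma actElems_ncard (a : JAct sig U) : (actElems a).ncard ≤ NAg sig := by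
  classical
  rw [actElems_eq]
  have h : (⋃ i, Set.range (a i).2) =
      ↑(Finset.univ.biUnion fun i : Fin (n+1) => Finset.univ.image (a i).2) := by
    ext u
    simp [Set.mem_iUnion, eq_comm]
  rw [h, Set.ncard_coe_finset]
  calc (Finset.univ.biUnion fun i : Fin (n+1) => Finset.univ.image (a i).2).card
      ≤ ∑ i, (Finset.univ.image (a i).2).card := Finset.card_biUnion_le
    _ ≤ ∑ i, Finset.univ.sup (sig i).np := by
        refine Finset.sum_le_sum fun i _ => ?_
        refine le_trans Finset.card_image_le ?_
        rw [Finset.card_univ, Fintype.card_fin]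
        exact Finset.le_sup (Finset.mem_univ (a i).1)
    _ = NAg sig := rfl

lemma ncard_range_le [Fintype C] (cst : C → U) : (Set.range cst).ncard ≤ Nat.card C := by
  classical
  rw [← Set.image_univ]
  refine le_trans (Set.ncard_image_le Set.finite_univ) ?_
  rw [Set.ncard_univ]

end CardSec


open Set

set_option linter.unusedSectionVars false
section MainSec

variable {D : Schema} {C : Type} [Fintype C] {n : ℕ} {sig : Fin (n+1) → AgentSig}
  {U U' : Type} {cst : C → U} {cst' : C → U'}
  {Ag : ∀ i, Agent D (sig i) U} {Ag' : ∀ i, Agent D (sig i) U'}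
  {M : ACMAS D sig Ag} {M' : ACMAS D sig Ag'}

lemma cardB {b : ℕ} (hb : BBounded M b)
    (hcard : ((2*b + Nat.card C + NAg sig : ℕ) : Cardinal) ≤ Cardinal.mk U')
    {s t : GState D n U} (hs : s ∈ M.S) (ht : t ∈ M.S) {E : Set U}
    (hEn : E.ncard ≤ NAg sig) :
    (((adomF s ∪ adomF t ∪ E) ∪ Set.range cst).ncard : Cardinal) ≤ Cardinal.mk U' := by
  refine le_trans ?_ hcard
  rw [Nat.cast_le]
  have h1 : ((adomF s ∪ adomF t ∪ E) ∪ Set.range cst).ncard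
      ≤ (adomF s ∪ adomF t ∪ E).ncard + (Set.range cst).ncard := Set.ncard_union_le _ _
  have h2 : (adomF s ∪ adomF t ∪ E).ncard ≤ (adomF s ∪ adomF t).ncard + E.ncard :=
    Set.ncard_union_le _ _
  have h3 : (adomF s ∪ adomF t).ncard ≤ (adomF s).ncard + (adomF t).ncard :=
    Set.ncard_union_le _ _
  have h4 := (hb s hs).2
  have h5 := (hb t ht).2
  have h6 := ncard_range_le cst
  omega

/-- Transfer of a concrete transition to the abstract system. -/
lemma fstep (habs : IsOAbstraction cst cst' M M') {s t : GState D n U} {a : JAct sig U}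
    (hs : s ∈ M.S) (ht : t ∈ M.S) (hτ : t ∈ M.τ s a) {g : U → U'}
    (hg : GoodMap cst cst' (adomF s ∪ adomF t ∪ actElems a) g) :
    mapG g t ∈ M'.τ (mapG g s) (JAct.map g a) := by
  rw [habs.2.2]
  refine ⟨s, hs, t, ht, a, hτ, g, ?_, g, fun u _ => rfl, ?_, rfl⟩
  · rw [oplusG_mapG]
    refine goodMap_witness (hg.mono ?_)
    rw [adomF_oplusG]
    intro x hx
    simp only [Set.mem_union] at hx ⊢
    tauto
  · refine hg.1.mono ?_
    rw [adomF_oplusG]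
    intro x hx
    simp only [Set.mem_union] at hx ⊢
    tauto

/-- Transfer of a concrete transition along a good self-map, via uniformity. -/
lemma push (hu : UniformT cst M) {s t : GState D n U} {a : JAct sig U}
    (hs : s ∈ M.S) (ht : t ∈ M.S) (hτ : t ∈ M.τ s a) {h : U → U}
    (hh : GoodMap cst cst (adomF s ∪ adomF t ∪ actElems a) h)
    (hs' : mapG h s ∈ M.S) :
    mapG h t ∈ M.τ (mapG h s) (JAct.map h a) := by
  refine hu s hs t ht (mapG h s) hs' (mapG h t) a hτ h ?_ h (fun u _ => rfl) ?_ hh.2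
  · rw [oplusG_mapG]
    refine goodMap_witness (hh.mono ?_)
    rw [adomF_oplusG]
    intro x hx
    simp only [Set.mem_union] at hx ⊢
    tauto
  · refine hh.1.mono ?_
    rw [adomF_oplusG]
    intro x hx
    simp only [Set.mem_union] at hx ⊢
    tauto

/-- Pulling an abstract transition back to concrete data. -/
lemma pull (habs : IsOAbstraction cst cst' M M') {s' t' : GState D n U'} {a' : JAct sig U'}
    (h : t' ∈ M'.τ s' a') :
    ∃ (s₁ t₁ : GState D n U) (a : JAct sig U) (ι : U → U'), s₁ ∈ M.S ∧ t₁ ∈ M.S ∧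
      t₁ ∈ M.τ s₁ a ∧ GoodMap cst cst' (adomF s₁ ∪ adomF t₁) ι ∧
      s' = mapG ι s₁ ∧ t' = mapG ι t₁ := by
  rw [habs.2.2] at h
  obtain ⟨s₁, hs₁, t₁, ht₁, a, hτ, ι, hw, _⟩ := h
  obtain ⟨hg, heq⟩ := witness_goodMap hw
  rw [adomF_oplusG] at hg
  rw [← oplusG_mapG] at heq
  obtain ⟨h1, h2⟩ := oplusG_inj heq
  exact ⟨s₁, t₁, a, ι, hs₁, ht₁, hτ, hg, h1, h2⟩

lemma forward_transfer [Nonempty U'] {b : ℕ} (hM : M.Std) (hb : BBounded M b)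
    (hcard : ((2*b + Nat.card C + NAg sig : ℕ) : Cardinal) ≤ Cardinal.mk U')
    (habs : IsOAbstraction cst cst' M M') :
    ∀ t ∈ M.S, ∀ g : U → U', GoodMap cst cst' (adomF t) g → mapG g t ∈ M'.S := by
  intro t ht
  have ht' : Relation.ReflTransGen M.Tr M.s0 t := by rw [hM.2] at ht; exact ht
  clear ht
  induction ht' with
  | refl =>
    intro g hg
    obtain ⟨ι₁, hι₁⟩ := habs.2.1.1
    obtain ⟨hι₁g, hs0'⟩ := witness_goodMap hι₁
    have hcongr : mapG g M.s0 = mapG ι₁ M.s0 := mapG_congr (fun u hu => by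
      obtain ⟨c, rfl⟩ := habs.2.1.2 hu
      rw [hg.2 c, hι₁g.2 c])
    rw [hcongr, ← hs0']
    exact M'.s0_mem
  | @tail s t hreach hstep ih =>
    intro g hg
    obtain ⟨a, hτ⟩ := hstep
    have hsS : s ∈ M.S := by rw [hM.2]; exact hreach
    have htS : t ∈ M.S := M.tau_closed s hsS a hτ
    obtain ⟨g₂, hg₂, heq⟩ := hg.extend (B := adomF s ∪ adomF t ∪ actElems a)
      (by intro x hx; simp only [Set.mem_union]; tauto)
      (((adomF_finite s).union (adomF_finite t)).union (actElems_finite a))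
      (cardB hb hcard hsS htS (actElems_ncard a))
    have hmt : mapG g₂ t = mapG g t := mapG_congr fun u hu => heq (Or.inl hu)
    have hsS' : mapG g₂ s ∈ M'.S := ih g₂ (hg₂.mono (by
      intro x hx; simp only [Set.mem_union]; tauto))
    have hstep' := fstep habs hsS htS hτ hg₂
    have := M'.tau_closed _ hsS' _ hstep'
    rwa [hmt] at this

lemma backward_transfer [Nonempty U] [Infinite U] (hM' : M'.Std) (hut : UniformT cst M)
    (habs : IsOAbstraction cst cst' M M') :
    ∀ t' ∈ M'.S, ∀ κ : U' → U, GoodMap cst' cst (adomF t') κ → mapG κ t' ∈ M.S := by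
  intro t' ht'
  have ht'' : Relation.ReflTransGen M'.Tr M'.s0 t' := by rw [hM'.2] at ht'; exact ht'
  clear ht'
  induction ht'' with
  | refl =>
    intro κ hκ
    obtain ⟨ι₁, hι₁⟩ := habs.2.1.1
    obtain ⟨hι₁g, hs0'⟩ := witness_goodMap hι₁
    have hid : mapG κ (mapG ι₁ M.s0) = M.s0 := by
      rw [mapG_comp]
      apply mapG_id'
      intro u hu
      obtain ⟨c, rfl⟩ := habs.2.1.2 hu
      show κ (ι₁ (cst c)) = cst c
      rw [hι₁g.2 c, hκ.2 c]
    rw [hs0', hid]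
    exact M.s0_mem
  | @tail sm tm hreach hstep ih =>
    intro κ hκ
    obtain ⟨a', hτ'⟩ := hstep
    obtain ⟨s₁, t₁, a, ι, hs₁, ht₁, hτ₁, hι, hseq, hteq⟩ := pull habs hτ'
    have hκι : GoodMap cst cst (adomF t₁) (κ ∘ ι) := by
      refine (hι.mono Set.subset_union_right).comp hκ ?_
      rw [← adomF_mapG, ← hteq]
    obtain ⟨h, hh, heq⟩ := hκι.extendInf
      (B := adomF s₁ ∪ adomF t₁ ∪ actElems a)
      (by intro x hx; simp only [Set.mem_union]; tauto)
      (((adomF_finite s₁).union (adomF_finite t₁)).union (actElems_finite a))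
    have h1 : mapG h t₁ = mapG κ tm := by
      calc mapG h t₁ = mapG (κ ∘ ι) t₁ := mapG_congr fun u hu => heq (Or.inl hu)
        _ = mapG κ (mapG ι t₁) := (mapG_comp _ _ _).symm
        _ = mapG κ tm := by rw [← hteq]
    obtain ⟨κι, hκιinv, hκιgood⟩ := hι.inv
    have hsih : mapG h s₁ ∈ M.S := by
      have hg₂ : GoodMap cst' cst (adomF sm) (h ∘ κι) := by
        refine (hκιgood.mono ?_).comp hh ?_
        · rw [hseq, adomF_mapG]
          exact Set.image_mono (f := ι) Set.subset_union_left
        · rw [hseq, adomF_mapG]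
          rintro x ⟨y, ⟨u, hu, rfl⟩, rfl⟩
          rw [hκιinv u (Or.inl (Or.inl hu))]
          exact Or.inl (Or.inl hu)
      have h2 := ih (h ∘ κι) hg₂
      have h3 : mapG (h ∘ κι) sm = mapG h s₁ := by
        calc mapG (h ∘ κι) sm = mapG h (mapG κι sm) := (mapG_comp _ _ _).symm
          _ = mapG h s₁ := by
              rw [hseq, mapG_inv_id hκιinv (fun u hu => Or.inl (Or.inl hu))]
      rwa [h3] at h2
    have hpush := push hut hs₁ ht₁ hτ₁ hh hsih
    have := M.tau_closed _ hsih _ hpush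
    rwa [h1] at this

end MainSec

/-! ### STATEMENT 13 -/

theorem statement13
    {D : Schema} {C : Type} [Fintype C] {n : ℕ}
    {sig : Fin (n+1) → AgentSig} {U U' : Type} [Infinite U]
    (cst : C → U) (cst' : C → U')
    (hcst : Function.Injective cst) (hcst' : Function.Injective cst')
    {Ag : ∀ i, Agent D (sig i) U} {Ag' : ∀ i, Agent D (sig i) U'}
    (M : ACMAS D sig Ag) (M' : ACMAS D sig Ag')
    (hM : M.Std) (hM' : M'.Std)
    (hu : Uniform cst M)
    (b : ℕ) (hb : BBounded M b)
    (h0 : adomF M.s0 ⊆ Set.range cst)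
    (hcard : ((2*b + Nat.card C + NAg sig : ℕ) : Cardinal) ≤ Cardinal.mk U')
    (habs : IsOAbstraction cst cst' M M') :
    OBisimSys cst cst' M M' := by
  classical
  obtain ⟨ι₁, hι₁⟩ := habs.2.1.1
  haveI : Nonempty U' := ⟨ι₁ (Classical.arbitrary U)⟩
  refine ⟨fun s s' => s ∈ M.S ∧ s' ∈ M'.S ∧
      ∃ g, GoodMap cst cst' (adomF s) g ∧ s' = mapG g s, ⟨?_, ?_⟩, ?_⟩
  · -- forward ⊕-simulation
    rintro s s' ⟨hsS, hs'S, g, hg, rfl⟩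
    refine ⟨hsS, hs'S, ⟨g, goodMap_witness hg⟩, ?_, ?_⟩
    · -- temporal clause
      rintro t ⟨a, hτ⟩
      have htS : t ∈ M.S := M.tau_closed s hsS a hτ
      obtain ⟨g₂, hg₂, heq⟩ := hg.extend (B := adomF s ∪ adomF t ∪ actElems a)
        (by intro x hx; simp only [Set.mem_union]; tauto)
        (((adomF_finite s).union (adomF_finite t)).union (actElems_finite a))
        (cardB hb hcard hsS htS (actElems_ncard a))
      have hms : mapG g₂ s = mapG g s := mapG_congr fun u hu => heq (Or.inl hu)
      have hstep := fstep habs hsS htS hτ hg₂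
      rw [hms] at hstep
      have ht'S : mapG g₂ t ∈ M'.S := M'.tau_closed _ hs'S _ hstep
      refine ⟨mapG g₂ t, ⟨_, hstep⟩, ⟨g₂, ?_⟩, htS, ht'S, g₂,
        hg₂.mono (by intro x hx; simp only [Set.mem_union]; tauto), rfl⟩
      have hop : oplusG (mapG g s) (mapG g₂ t) = mapG g₂ (oplusG s t) := by
        rw [← hms, oplusG_mapG]
      rw [hop]
      refine goodMap_witness (hg₂.mono ?_)
      rw [adomF_oplusG]
      intro x hx
      simp only [Set.mem_union] at hx ⊢
      tauto
    · -- epistemic clause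
      rintro t i ⟨hsS₂, htS, hsi⟩
      obtain ⟨g₂, hg₂, heq⟩ := hg.extend (B := adomF s ∪ adomF t ∪ (∅ : Set U))
        (by intro x hx; simp only [Set.mem_union]; tauto)
        (((adomF_finite s).union (adomF_finite t)).union Set.finite_empty)
        (cardB hb hcard hsS htS (by rw [Set.ncard_empty]; exact Nat.zero_le _))
      have hms : mapG g₂ s = mapG g s := mapG_congr fun u hu => heq (Or.inl hu)
      have ht'S : mapG g₂ t ∈ M'.S :=
        forward_transfer hM hb hcard habs t htS g₂
          (hg₂.mono (by intro x hx; simp only [Set.mem_union]; tauto))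
      refine ⟨mapG g₂ t, ⟨hs'S, ht'S, ?_⟩, ⟨g₂, ?_⟩, htS, ht'S, g₂,
        hg₂.mono (by intro x hx; simp only [Set.mem_union]; tauto), rfl⟩
      · -- components coincide
        show (s i.succ).map g = (t i.succ).map g₂
        rw [← hsi]
        exact Inst.map_congr fun u hu =>
          (heq (Or.inl (adom_subset_adomF s i.succ hu))).symm
      · -- Iso of joins
        have hop : oplusG (mapG g s) (mapG g₂ t) = mapG g₂ (oplusG s t) := by
          rw [← hms, oplusG_mapG]
        rw [hop]
        refine goodMap_witness (hg₂.mono ?_)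
        rw [adomF_oplusG]
        intro x hx
        simp only [Set.mem_union] at hx ⊢
        tauto
  · -- backward ⊕-simulation
    rintro sp s ⟨hsS, hs'S, g, hg, rfl⟩
    obtain ⟨κ, hκinv, hκgood⟩ := hg.inv
    have hadom : adomF (mapG g s) = g '' adomF s := adomF_mapG g s
    have hκgood' : GoodMap cst' cst (adomF (mapG g s)) κ := by
      rw [hadom]; exact hκgood
    have hκs : mapG κ (mapG g s) = s := mapG_inv_id hκinv (fun u hu => Or.inl hu)
    refine ⟨hs'S, hsS, ⟨κ, by have hw := goodMap_witness hκgood'; rwa [hκs] at hw⟩, ?_, ?_⟩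
    · -- temporal clause
      rintro t' ⟨a', hτ'⟩
      obtain ⟨s₁, t₁, a, ι, hs₁, ht₁, hτ₁, hι, hseq, hteq⟩ := pull habs hτ'
      have hm : GoodMap cst cst (adomF s₁) (κ ∘ ι) := by
        refine (hι.mono Set.subset_union_left).comp hκgood' ?_
        rw [← adomF_mapG, ← hseq]
      obtain ⟨h, hh, heq⟩ := hm.extendInf (B := adomF s₁ ∪ adomF t₁ ∪ actElems a)
        (by intro x hx; simp only [Set.mem_union]; tauto)
        (((adomF_finite s₁).union (adomF_finite t₁)).union (actElems_finite a))
      have hhs₁ : mapG h s₁ = s := by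
        calc mapG h s₁ = mapG (κ ∘ ι) s₁ := mapG_congr fun u hu => heq (Or.inl hu)
          _ = mapG κ (mapG ι s₁) := (mapG_comp _ _ _).symm
          _ = mapG κ (mapG g s) := by rw [← hseq]
          _ = s := hκs
      have hpush := push hu.1 hs₁ ht₁ hτ₁ hh (by rw [hhs₁]; exact hsS)
      rw [hhs₁] at hpush
      have htS : mapG h t₁ ∈ M.S := M.tau_closed s hsS _ hpush
      have ht'S : t' ∈ M'.S := M'.tau_closed _ hs'S a' hτ'
      obtain ⟨κι, hκιinv, hκιgood⟩ := hι.inv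
      -- Iso (oplusG (mapG g s) t') (oplusG s (mapG h t₁))
      have hν : GoodMap cst' cst (adomF (oplusG (mapG g s) t')) (h ∘ κι) := by
        rw [adomF_oplusG, hseq, hteq, adomF_mapG, adomF_mapG, ← Set.image_union]
        refine hκιgood.comp hh ?_
        rintro x ⟨y, ⟨u, hu, rfl⟩, rfl⟩
        rw [hκιinv u (Or.inl hu)]
        exact Or.inl hu
      have hνmap : mapG (h ∘ κι) (oplusG (mapG g s) t') = oplusG s (mapG h t₁) := by
        rw [hseq, hteq, oplusG_mapG]
        calc mapG (h ∘ κι) (mapG ι (oplusG s₁ t₁))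
            = mapG h (mapG κι (mapG ι (oplusG s₁ t₁))) := (mapG_comp _ _ _).symm
          _ = mapG h (oplusG s₁ t₁) := by
              rw [mapG_inv_id hκιinv
                (by rw [adomF_oplusG]; exact Set.subset_union_left)]
          _ = oplusG (mapG h s₁) (mapG h t₁) := (oplusG_mapG _ _ _).symm
          _ = oplusG s (mapG h t₁) := by rw [hhs₁]
      -- R (mapG h t₁) t'
      obtain ⟨ρ, hρinv, hρgood⟩ := hh.inv
      have hμ : GoodMap cst cst' (adomF (mapG h t₁)) (ι ∘ ρ) := by
        rw [adomF_mapG]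
        refine (hρgood.mono (Set.image_mono (f := h)
          (by intro x hx; simp only [Set.mem_union]; tauto))).comp
          (hι.mono Set.subset_union_right) ?_
        rintro x ⟨y, ⟨u, hu, rfl⟩, rfl⟩
        rw [hρinv u (Or.inl (Or.inl (Or.inr hu)))]
        exact hu
      have hμmap : mapG (ι ∘ ρ) (mapG h t₁) = t' := by
        calc mapG (ι ∘ ρ) (mapG h t₁)
            = mapG ι (mapG ρ (mapG h t₁)) := (mapG_comp _ _ _).symm
          _ = mapG ι t₁ := by
              rw [mapG_inv_id hρinv
                (fun u hu => Or.inl (Or.inl (Or.inr hu)))]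
          _ = t' := hteq.symm
      exact ⟨mapG h t₁, ⟨JAct.map h a, hpush⟩,
        ⟨h ∘ κι, by have hw := goodMap_witness hν; rwa [hνmap] at hw⟩,
        htS, ht'S, ι ∘ ρ, hμ, hμmap.symm⟩
    · -- epistemic clause
      rintro t' i ⟨hs'S₂, ht'S, hconn⟩
      obtain ⟨h, hh, heq⟩ := hκgood'.extendInf (B := adomF (mapG g s) ∪ adomF t')
        Set.subset_union_left
        ((adomF_finite _).union (adomF_finite t'))
      have hhs : mapG h (mapG g s) = s := by
        have hc : mapG h (mapG g s) = mapG κ (mapG g s) :=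
          mapG_congr fun u hu => heq (Or.inl hu)
        rw [hc, hκs]
      have htS : mapG h t' ∈ M.S :=
        backward_transfer hM' hu.1 habs t' ht'S h (hh.mono Set.subset_union_right)
      have hcomp : s i.succ = (mapG h t') i.succ := by
        have e1 : s i.succ = (mapG h (mapG g s)) i.succ := by rw [hhs]
        rw [e1]
        show ((mapG g s) i.succ).map h = (t' i.succ).map h
        rw [hconn]
      have hhgood : GoodMap cst' cst (adomF (oplusG (mapG g s) t')) h := by
        rw [adomF_oplusG]; exact hh
      have hopeq : mapG h (oplusG (mapG g s) t') = oplusG s (mapG h t') := by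
        rw [← oplusG_mapG, hhs]
      obtain ⟨ρ, hρinv, hρgood⟩ := hh.inv
      have hμ : GoodMap cst cst' (adomF (mapG h t')) ρ := by
        rw [adomF_mapG]
        exact hρgood.mono (Set.image_mono (f := h) Set.subset_union_right)
      have hμmap : mapG ρ (mapG h t') = t' :=
        mapG_inv_id hρinv (fun u hu => Or.inl (Or.inr hu))
      exact ⟨mapG h t', ⟨hsS, htS, hcomp⟩,
        ⟨h, by have hw := goodMap_witness hhgood; rwa [hopeq] at hw⟩,
        htS, ht'S, ρ, hμ, hμmap.symm⟩
  · -- initial states are related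
    exact ⟨M.s0_mem, M'.s0_mem, ι₁, (witness_goodMap hι₁).1, (witness_goodMap hι₁).2⟩
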